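/- arXiv:2204.08044 — 2 statements merged into one kernel-verified Lean document; each statement's English description precedes it below -/
import Mathlib

section
/- Fix n agents, a finite nonempty set 𝒜 of alternatives, and for each agent i a valuation v_i : 𝒜 × (ℝ≥0)^n → ℝ≥0 that is nondecreasing in every signal coordinate and submodular over signals (SOS). For a signal profile s ∈ (ℝ≥0)^n, A ⊆ [n] and i ∈ [n], let s^{A,i} ∈ (ℝ≥0)^n denote the vector that agrees with s on coordinates in A ∪ {i} and is 0 on all other coordinates. Then for every s: 2^{−n} · Σ_{A ⊆ [n]} max_{a∈𝒜} Σ_{i∉A} v_i(a; s^{A,i}) ≥ (1/4) · max_{a∈𝒜} Σ_{i∈[n]} v_i(a; s). (This is the welfare guarantee of the Random-Sampling-VCG mechanism, which samples A ⊆ [n] uniformly at random and allocates an alternative maximizing Σ_{i∉A} v_i(a; s^{A,i}).) -/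
open Finset

noncomputable section

/-- `v` is submodular over signals (SOS). -/
def SOSfun {n : ℕ} (v : (Fin n → ℝ) → ℝ) : Prop :=
  ∀ (i : Fin n) (s s' : Fin n → ℝ), (∀ j, 0 ≤ s j) → (∀ j, s j ≤ s' j) →
    v (Function.update s i (s' i)) - v s ≥ v s' - v (Function.update s' i (s i))

/-- `maskS A i s` agrees with `s` on `A ∪ {i}` and is `0` on all other coordinates. -/
def maskS {n : ℕ} (A : Finset (Fin n)) (i : Fin n) (s : Fin n → ℝ) : Fin n → ℝ :=
  fun j => if j ∈ A ∨ j = i then s j else 0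

def maskF {n : ℕ} (B : Finset (Fin n)) (s : Fin n → ℝ) : Fin n → ℝ :=
  fun j => if j ∈ B then s j else 0

lemma maskF_nonneg {n : ℕ} (B : Finset (Fin n)) (s : Fin n → ℝ) (hs : ∀ j, 0 ≤ s j) :
    ∀ j, 0 ≤ maskF B s j := fun j => by
  unfold maskF; split
  · exact hs j
  · exact le_refl _

lemma maskF_le {n : ℕ} {B B' : Finset (Fin n)} (s : Fin n → ℝ) (hs : ∀ j, 0 ≤ s j)
    (h : B ⊆ B') : ∀ j, maskF B s j ≤ maskF B' s j := fun j => by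
  unfold maskF
  by_cases hj : j ∈ B
  · simp [hj, h hj]
  · simp only [hj, if_neg hj, if_false]
    split
    · exact hs j
    · exact le_refl _

lemma marg {n : ℕ} (v : (Fin n → ℝ) → ℝ) (hv : SOSfun v) (s : Fin n → ℝ)
    (hs : ∀ j, 0 ≤ s j) {B B' : Finset (Fin n)} (hBB : B ⊆ B') {i : Fin n} (hi : i ∉ B') :
    v (maskF (insert i B') s) - v (maskF B' s) ≤ v (maskF (insert i B) s) - v (maskF B s) := by
  have hiB : i ∉ B := fun h => hi (hBB h)
  have key := hv i (maskF B s) (maskF (insert i B') s) (maskF_nonneg B s hs)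
    (maskF_le s hs (fun j hj => Finset.mem_insert_of_mem (hBB hj)))
  have e1 : Function.update (maskF B s) i (maskF (insert i B') s i) = maskF (insert i B) s := by
    funext j
    rcases eq_or_ne j i with h | h
    · subst h; simp [maskF]
    · simp [Function.update_of_ne h, maskF, Finset.mem_insert, h]
  have e2 : Function.update (maskF (insert i B') s) i (maskF B s i) = maskF B' s := by
    funext j
    rcases eq_or_ne j i with h | h
    · subst h; simp [maskF, hiB, hi]
    · simp [Function.update_of_ne h, maskF, Finset.mem_insert, h]
  rw [e1, e2] at key
  linarith

lemma chain {n : ℕ} (v : (Fin n → ℝ) → ℝ) (hv : SOSfun v) (s : Fin n → ℝ)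
    (hs : ∀ j, 0 ≤ s j) (X : Finset (Fin n)) :
    ∀ Y Z : Finset (Fin n), Disjoint X Y → Z ⊆ Y →
      v (maskF (X ∪ Y) s) - v (maskF Y s) ≤ v (maskF (X ∪ Z) s) - v (maskF Z s) := by
  induction X using Finset.induction_on with
  | empty => intro Y Z _ _; simp
  | @insert i X hiX ih =>
      intro Y Z hdisj hZ
      have hiY : i ∉ Y := fun h => (Finset.disjoint_left.mp hdisj (Finset.mem_insert_self i X)) h
      have hXY : Disjoint X Y := by
        exact Finset.disjoint_of_subset_left (Finset.subset_insert i X) hdisj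
      have hiXY : i ∉ X ∪ Y := by simp [hiX, hiY]
      have hsub : X ∪ Z ⊆ X ∪ Y := Finset.union_subset_union_right hZ
      have m1 := marg v hv s hs hsub hiXY
      have m2 := ih Y Z hXY hZ
      rw [Finset.insert_union, Finset.insert_union]
      linarith

lemma pair_ineq {n : ℕ} (v : (Fin n → ℝ) → ℝ)
    (hnn : ∀ t : Fin n → ℝ, (∀ j, 0 ≤ t j) → 0 ≤ v t) (hv : SOSfun v)
    (s : Fin n → ℝ) (hs : ∀ j, 0 ≤ s j) (A : Finset (Fin n)) (i : Fin n) (hi : i ∉ A) :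
    v s ≤ v (maskS A i s) + v (maskS (Aᶜ.erase i) i s) := by
  have h1 : maskS A i s = maskF (insert i A) s := by
    funext j; simp [maskS, maskF, Finset.mem_insert, or_comm]
  have h2 : maskS (Aᶜ.erase i) i s = maskF (insert i (Aᶜ.erase i)) s := by
    funext j; simp [maskS, maskF, Finset.mem_insert, or_comm]
  have hdisj : Disjoint (Aᶜ.erase i) (insert i A) := by
    rw [Finset.disjoint_left]
    intro j hj
    simp only [Finset.mem_erase, Finset.mem_compl] at hj
    simp [hj.1, hj.2]
  have hZ : ({i} : Finset (Fin n)) ⊆ insert i A := by simp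
  have hc := chain v hv s hs (Aᶜ.erase i) (insert i A) {i} hdisj hZ
  have hu : Aᶜ.erase i ∪ insert i A = Finset.univ := by
    ext j
    simp only [Finset.mem_union, Finset.mem_erase, Finset.mem_compl, Finset.mem_insert,
      Finset.mem_univ, iff_true]
    rcases eq_or_ne j i with h | h
    · tauto
    · by_cases hjA : j ∈ A <;> tauto
  have hu2 : Aᶜ.erase i ∪ {i} = insert i (Aᶜ.erase i) := by
    ext j; simp [or_comm]
  have hmu : maskF Finset.univ s = s := by funext j; simp [maskF]
  have h0 : 0 ≤ v (maskF {i} s) := hnn _ (maskF_nonneg _ s hs)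
  rw [hu, hu2, hmu] at hc
  rw [h1, h2]
  linarith

/-- The welfare guarantee of the Random-Sampling-VCG mechanism: for
nonnegative, nondecreasing, SOS valuations, sampling `A ⊆ [n]` uniformly and allocating an
alternative maximizing `∑_{i ∉ A} v_i(a; s^{A,i})` obtains, in expectation, at least a
quarter of the optimal social welfare. -/
theorem random_sampling_vcg_welfare
    {n : ℕ} {Alt : Type*} [Fintype Alt] [Nonempty Alt]
    (v : Fin n → Alt → (Fin n → ℝ) → ℝ)
    (hnn : ∀ i a (s : Fin n → ℝ), (∀ j, 0 ≤ s j) → 0 ≤ v i a s)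
    (hmono : ∀ i a (s s' : Fin n → ℝ), (∀ j, 0 ≤ s j) → (∀ j, s j ≤ s' j) →
      v i a s ≤ v i a s')
    (hsos : ∀ i a, SOSfun (v i a))
    (s : Fin n → ℝ) (hs : ∀ j, 0 ≤ s j) :
    (1 / 2 ^ n : ℝ) *
        ∑ A : Finset (Fin n),
          Finset.univ.sup' Finset.univ_nonempty
            (fun a : Alt => ∑ i ∈ Aᶜ, v i a (maskS A i s)) ≥
      (1 / 4 : ℝ) *
        Finset.univ.sup' Finset.univ_nonempty (fun a : Alt => ∑ i, v i a s) := by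
  classical
  obtain ⟨astar, -, ha⟩ := Finset.exists_mem_eq_sup' Finset.univ_nonempty
    (fun a : Alt => ∑ i, v i a s)
  set OPT : ℝ := ∑ i, v i astar s with hOPT
  -- swap lemma
  have swap : ∀ g : Fin n → Finset (Fin n) → ℝ,
      ∑ A : Finset (Fin n), ∑ i ∈ Aᶜ, g i A
        = ∑ i : Fin n, ∑ A ∈ Finset.univ.filter (fun A : Finset (Fin n) => i ∉ A), g i A := by
    intro g
    have h1 : ∀ A : Finset (Fin n), ∑ i ∈ Aᶜ, g i A
        = ∑ i : Fin n, if i ∉ A then g i A else 0 := by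
      intro A
      rw [show (Aᶜ : Finset (Fin n)) = Finset.univ.filter (fun i => i ∉ A) by ext j; simp]
      rw [Finset.sum_filter]
    simp_rw [h1]
    rw [Finset.sum_comm]
    congr 1
    funext i
    rw [Finset.sum_filter]
  set S : ℝ := ∑ A : Finset (Fin n), ∑ i ∈ Aᶜ, v i astar (maskS A i s) with hS
  set Sc : ℝ := ∑ A : Finset (Fin n), ∑ i ∈ Aᶜ, v i astar s with hSc
  -- claim 1
  have claim1 : S ≤ ∑ A : Finset (Fin n),
      Finset.univ.sup' Finset.univ_nonempty
        (fun a : Alt => ∑ i ∈ Aᶜ, v i a (maskS A i s)) := by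
    apply Finset.sum_le_sum
    intro A _
    exact Finset.le_sup' (fun a : Alt => ∑ i ∈ Aᶜ, v i a (maskS A i s)) (Finset.mem_univ astar)
  -- claim 2 : Sc ≤ 2 * S
  have claim2 : Sc ≤ 2 * S := by
    rw [hSc, hS, swap, swap]
    rw [Finset.mul_sum]
    apply Finset.sum_le_sum
    intro k _
    set P := Finset.univ.filter (fun A : Finset (Fin n) => k ∉ A) with hP
    have hss : ∀ A ∈ P, ((Aᶜ.erase k)ᶜ.erase k) = A := by
      intro A hA
      simp only [hP, Finset.mem_filter] at hA
      ext j
      simp only [Finset.mem_erase, Finset.mem_compl]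
      rcases eq_or_ne j k with h | h
      · subst h; simp [hA.2]
      · by_cases hj : j ∈ A <;> simp [h, hj]
    have hinv : ∀ f : Finset (Fin n) → ℝ,
        ∑ A ∈ P, f A = ∑ A ∈ P, f (Aᶜ.erase k) := by
      intro f
      apply Finset.sum_nbij' (i := fun A => Aᶜ.erase k) (j := fun A => Aᶜ.erase k)
      · intro A hA; simp [hP]
      · intro A hA; simp [hP]
      · intro A hA; exact hss A hA
      · intro A hA; exact hss A hA
      · intro A hA; rw [hss A hA]
    have key : ∀ A ∈ P, v k astar s
        ≤ v k astar (maskS A k s) + v k astar (maskS (Aᶜ.erase k) k s) := by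
      intro A hA
      simp only [hP, Finset.mem_filter] at hA
      exact pair_ineq (v k astar) (fun t ht => hnn k astar t ht) (hsos k astar) s hs A k hA.2
    calc ∑ A ∈ P, v k astar s ≤ ∑ A ∈ P, (v k astar (maskS A k s) + v k astar (maskS (Aᶜ.erase k) k s)) :=
          Finset.sum_le_sum key
      _ = ∑ A ∈ P, v k astar (maskS A k s) + ∑ A ∈ P, v k astar (maskS (Aᶜ.erase k) k s) :=
          Finset.sum_add_distrib
      _ = 2 * ∑ A ∈ P, v k astar (maskS A k s) := by
          rw [← hinv (fun A => v k astar (maskS A k s))]; ring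
  -- claim 3 : 2 * Sc = 2 ^ n * OPT
  have claim3 : 2 * Sc = 2 ^ n * OPT := by
    have hcompl : ∑ A : Finset (Fin n), ∑ i ∈ A, v i astar s
        = ∑ A : Finset (Fin n), ∑ i ∈ Aᶜ, v i astar s := by
      apply Fintype.sum_bijective (fun A : Finset (Fin n) => Aᶜ)
        (Function.Involutive.bijective (fun A => compl_compl A))
      intro A
      simp
    have htot : ∀ A : Finset (Fin n), ∑ i ∈ A, v i astar s + ∑ i ∈ Aᶜ, v i astar s = OPT := by
      intro A
      rw [hOPT]
      exact Finset.sum_add_sum_compl A _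
    have : ∑ A : Finset (Fin n), (∑ i ∈ A, v i astar s + ∑ i ∈ Aᶜ, v i astar s)
        = (2 ^ n : ℝ) * OPT := by
      rw [Finset.sum_congr rfl (fun A _ => htot A)]
      rw [Finset.sum_const, nsmul_eq_mul]
      congr 1
      simp [Fintype.card_finset]
    rw [Finset.sum_add_distrib, hcompl] at this
    rw [hSc]
    linarith [this]
  -- conclude
  rw [ha]
  have h2n : (0 : ℝ) < 2 ^ n := by positivity
  rw [ge_iff_le]
  have hfinal : (1 / 4 : ℝ) * OPT * 2 ^ n
      ≤ (∑ A : Finset (Fin n),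
          Finset.univ.sup' Finset.univ_nonempty
            (fun a : Alt => ∑ i ∈ Aᶜ, v i a (maskS A i s))) := by
    nlinarith [claim1, claim2, claim3]
  have hmul := mul_le_mul_of_nonneg_left hfinal (le_of_lt (one_div_pos.mpr h2n))
  have heq : (1 / 4 : ℝ) * OPT = (1 / 2 ^ n : ℝ) * ((1 / 4) * OPT * 2 ^ n) := by
    field_simp
  linarith [hmul, heq.le]
end
end

section
/- Let v : (ℝ≥0)^n → ℝ≥0 be nondecreasing in every coordinate and submodular over signals (SOS). Fix i ∈ [n] and a signal profile s ∈ (ℝ≥0)^n. For A ⊆ [n]∖{i}, let s^A ∈ (ℝ≥0)^n denote the vector that agrees with s on coordinates in A ∪ {i} and is 0 on all other coordinates. Then 2^{−(n−1)} · Σ_{A ⊆ [n]∖{i}} v(s^A) ≥ (1/2) · v(s); that is, for A a uniformly random subset of [n]∖{i}, E_A[v(s^A)] ≥ v(s)/2. -/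
open Finset

noncomputable section

lemma maskS_nonneg {n : ℕ} (A : Finset (Fin n)) (i : Fin n) (s : Fin n → ℝ)
    (hs : ∀ j, 0 ≤ s j) : ∀ j, 0 ≤ maskS A i s j := by
  intro j; unfold maskS; split
  · exact hs j
  · exact le_refl 0

lemma maskS_mono {n : ℕ} {A B : Finset (Fin n)} (hAB : A ⊆ B) (i : Fin n) (s : Fin n → ℝ)
    (hs : ∀ j, 0 ≤ s j) : ∀ j, maskS A i s j ≤ maskS B i s j := by
  intro j; unfold maskS
  by_cases h : j ∈ A ∨ j = i
  · rw [if_pos h, if_pos (h.imp_left (fun hj => hAB hj))]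
  · rw [if_neg h]
    by_cases h2 : j ∈ B ∨ j = i
    · rw [if_pos h2]; exact hs j
    · rw [if_neg h2]

lemma update_maskS {n : ℕ} (A : Finset (Fin n)) (i j : Fin n) (s : Fin n → ℝ) :
    Function.update (maskS A i s) j (s j) = maskS (insert j A) i s := by
  funext k
  rcases eq_or_ne k j with rfl | hk
  · simp [maskS]
  · simp [Function.update_of_ne hk, maskS, hk, Finset.mem_insert]

lemma update_maskS_zero {n : ℕ} (A : Finset (Fin n)) (i j : Fin n) (s : Fin n → ℝ)
    (hjA : j ∉ A) (hji : j ≠ i) :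
    Function.update (maskS (insert j A) i s) j 0 = maskS A i s := by
  funext k
  rcases eq_or_ne k j with rfl | hk
  · simp [maskS, hjA, hji]
  · simp [Function.update_of_ne hk, maskS, hk, Finset.mem_insert]

/-- The submodular telescoping step: adding coordinate `j` on top of `A ∪ B`
yields no more gain than adding it on top of `B` alone. -/
lemma maskS_step {n : ℕ} (v : (Fin n → ℝ) → ℝ) (hsos : SOSfun v)
    (i : Fin n) (s : Fin n → ℝ) (hs : ∀ j, 0 ≤ s j)
    (A B : Finset (Fin n)) (j : Fin n) (hBA : B ⊆ A) (hjA : j ∉ A) (hji : j ≠ i) :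
    v (maskS (insert j A) i s) - v (maskS A i s)
      ≤ v (maskS (insert j B) i s) - v (maskS B i s) := by
  have hjB : j ∉ B := fun h => hjA (hBA h)
  have h := hsos j (maskS B i s) (maskS (insert j A) i s)
    (maskS_nonneg B i s hs)
    (maskS_mono (hBA.trans (Finset.subset_insert j A)) i s hs)
  have h1 : (maskS (insert j A) i s) j = s j := by
    simp [maskS]
  have h2 : (maskS B i s) j = 0 := by
    simp [maskS, hjB, hji]
  rw [h1, h2, update_maskS, update_maskS_zero A i j s hjA hji] at h
  linarith

/-- Submodularity across sets: `v(s^{A∪B}) - v(s^A) ≤ v(s^B) - v(s^∅)`. -/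
lemma maskS_submod {n : ℕ} (v : (Fin n → ℝ) → ℝ) (hsos : SOSfun v)
    (i : Fin n) (s : Fin n → ℝ) (hs : ∀ j, 0 ≤ s j)
    (A : Finset (Fin n)) :
    ∀ B : Finset (Fin n), Disjoint A B → i ∉ B →
    v (maskS (A ∪ B) i s) - v (maskS A i s) ≤ v (maskS B i s) - v (maskS ∅ i s) := by
  intro B
  induction B using Finset.induction_on with
  | empty => intro _ _; simp
  | @insert j B hjB ih =>
    intro hdisj hiB
    have hji : j ≠ i := fun h => hiB (h ▸ Finset.mem_insert_self j B)
    have hdisj' : Disjoint A B := hdisj.mono_right (Finset.subset_insert j B)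
    have hiB' : i ∉ B := fun h => hiB (Finset.mem_insert_of_mem h)
    have hjA : j ∉ A := Finset.disjoint_right.mp hdisj (Finset.mem_insert_self j B)
    have hjAB : j ∉ A ∪ B := by
      simp [hjA, hjB]
    have hstep := maskS_step v hsos i s hs (A ∪ B) B j Finset.subset_union_right hjAB hji
    have hih := ih hdisj' hiB'
    have : A ∪ insert j B = insert j (A ∪ B) := by
      ext k; simp [Finset.mem_insert, Finset.mem_union, or_left_comm]
    rw [this]
    linarith

/-- Key Lemma. For a nonnegative, nondecreasing SOS function `v`, a
coordinate `i`, and a nonnegative signal profile `s`: the average over all subsets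
`A ⊆ [n] ∖ {i}` of `v(s^A)`, where `s^A` agrees with `s` on `A ∪ {i}` and is `0`
elsewhere, is at least `v(s)/2`. -/
theorem sos_key_lemma
    {n : ℕ} (v : (Fin n → ℝ) → ℝ)
    (hnn : ∀ s : Fin n → ℝ, (∀ j, 0 ≤ s j) → 0 ≤ v s)
    (hmono : ∀ s s' : Fin n → ℝ, (∀ j, 0 ≤ s j) → (∀ j, s j ≤ s' j) → v s ≤ v s')
    (hsos : SOSfun v)
    (i : Fin n) (s : Fin n → ℝ) (hs : ∀ j, 0 ≤ s j) :
    (1 / 2 ^ (n - 1) : ℝ) * ∑ A ∈ ({i}ᶜ : Finset (Fin n)).powerset, v (maskS A i s) ≥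
      v s / 2 := by
  set P := ({i}ᶜ : Finset (Fin n)).powerset with hP
  have hpair : ∀ A ∈ P, v s ≤ v (maskS A i s) + v (maskS (({i}ᶜ : Finset (Fin n)) \ A) i s) := by
    intro A hA
    rw [hP, Finset.mem_powerset] at hA
    have hdisj : Disjoint A (({i}ᶜ : Finset (Fin n)) \ A) := Finset.disjoint_sdiff
    have hiB : i ∉ (({i}ᶜ : Finset (Fin n)) \ A) := by simp
    have hsub := maskS_submod v hsos i s hs A (({i}ᶜ : Finset (Fin n)) \ A) hdisj hiB
    have hunion : A ∪ (({i}ᶜ : Finset (Fin n)) \ A) = ({i}ᶜ : Finset (Fin n)) :=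
      Finset.union_sdiff_of_subset hA
    have hfull : maskS ({i}ᶜ : Finset (Fin n)) i s = s := by
      funext j
      rcases eq_or_ne j i with rfl | hj
      · simp [maskS]
      · simp [maskS, hj]
    have h0 : 0 ≤ v (maskS ∅ i s) := hnn _ (maskS_nonneg ∅ i s hs)
    rw [hunion, hfull] at hsub
    linarith
  have hsum2 : ∑ A ∈ P, v (maskS (({i}ᶜ : Finset (Fin n)) \ A) i s)
      = ∑ A ∈ P, v (maskS A i s) := by
    apply Finset.sum_nbij' (i := fun A => ({i}ᶜ : Finset (Fin n)) \ A)
      (j := fun A => ({i}ᶜ : Finset (Fin n)) \ A)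
    · intro A hA
      rw [hP, Finset.mem_powerset] at hA ⊢
      exact Finset.sdiff_subset
    · intro A hA
      rw [hP, Finset.mem_powerset] at hA ⊢
      exact Finset.sdiff_subset
    · intro A hA
      rw [hP, Finset.mem_powerset] at hA
      exact Finset.sdiff_sdiff_eq_self hA
    · intro A hA
      rw [hP, Finset.mem_powerset] at hA
      exact Finset.sdiff_sdiff_eq_self hA
    · intro A hA; rfl
  have hcard : P.card = 2 ^ (n - 1) := by
    rw [hP, Finset.card_powerset, Finset.card_compl, Finset.card_singleton, Fintype.card_fin]
  have hge : (2 : ℝ) ^ (n - 1) * v s ≤ 2 * ∑ A ∈ P, v (maskS A i s) := by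
    have h := Finset.sum_le_sum hpair
    rw [Finset.sum_add_distrib, hsum2, Finset.sum_const, hcard, nsmul_eq_mul] at h
    push_cast at h
    linarith
  have hpow : (0 : ℝ) < 2 ^ (n - 1) := by positivity
  rw [ge_iff_le, one_div, inv_mul_eq_div, le_div_iff₀ hpow]
  nlinarith [hge]
end
end
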